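/- (Stampacchia's Lemma) Let φ : [x̄, ∞) → [0, ∞) be non-increasing and suppose there exist C > 0, η > 0, γ > 1 such that (y - x)^η φ(y) ≤ C φ(x)^γ for all y ≥ x ≥ x̄. Then φ(z) = 0 for all z ≥ x̄ + d, where d^η = C φ(x̄)^{γ-1} 2^{ηγ/(γ-1)}. -/

import Mathlib

open Real

set_option maxHeartbeats 1000000 in
/-- **Stampacchia's Lemma.** Let `φ : [x̄, ∞) → [0, ∞)` be non-increasing and suppose
there exist `C > 0`, `η > 0`, `γ > 1` such that `(y - x)^η φ(y) ≤ C φ(x)^γ` for all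
`y ≥ x ≥ x̄`. Then `φ(z) = 0` for all `z ≥ x̄ + d`, where
`d^η = C φ(x̄)^{γ-1} 2^{ηγ/(γ-1)}`. -/
theorem stampacchia_lemma
    (φ : ℝ → ℝ) (xbar C η γ : ℝ) (hC : 0 < C) (hη : 0 < η) (hγ : 1 < γ)
    (hnonneg : ∀ x, xbar ≤ x → 0 ≤ φ x)
    (hmono : ∀ x y, xbar ≤ x → x ≤ y → φ y ≤ φ x)
    (hineq : ∀ x y, xbar ≤ x → x ≤ y → (y - x) ^ η * φ y ≤ C * φ x ^ γ) :
    ∀ z, xbar + (C * φ xbar ^ (γ - 1) * 2 ^ (η * γ / (γ - 1))) ^ η⁻¹ ≤ z → φ z = 0 := by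
  intro z hz
  set a := φ xbar with ha_def
  have ha0 : 0 ≤ a := hnonneg xbar le_rfl
  have hγ1 : (0:ℝ) < γ - 1 := by linarith
  rcases eq_or_lt_of_le ha0 with h0 | ha
  · -- φ xbar = 0
    have hD : C * a ^ (γ - 1) * 2 ^ (η * γ / (γ - 1)) = 0 := by
      rw [← h0, Real.zero_rpow (ne_of_gt hγ1)]; ring
    rw [hD, Real.zero_rpow (by positivity)] at hz
    have hzx : xbar ≤ z := by linarith
    have h1 := hmono xbar z le_rfl hzx
    have h2 := hnonneg z hzx
    rw [← ha_def, ← h0] at h1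
    linarith
  · set D := C * a ^ (γ - 1) * 2 ^ (η * γ / (γ - 1)) with hD_def
    have hDpos : 0 < D := by positivity
    set d := D ^ η⁻¹ with hd_def
    have hdpos : 0 < d := Real.rpow_pos_of_pos hDpos _
    have hdη : d ^ η = D := Real.rpow_inv_rpow hDpos.le (ne_of_gt hη)
    set b := η / (γ - 1) with hb_def
    have hbpos : 0 < b := div_pos hη hγ1
    have hbγ : b * (γ - 1) = η := by rw [hb_def]; exact div_mul_cancel₀ _ hγ1.ne'
    -- iteration
    have key : ∀ k : ℕ, φ (xbar + d - d * 2 ^ (-(k:ℝ))) ≤ a * 2 ^ (-(b * k)) := by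
      intro k
      induction k with
      | zero => simp [ha_def]
      | succ k ih =>
        have hk1 : ((k+1 : ℕ) : ℝ) = (k:ℝ) + 1 := by push_cast; ring
        set xk := xbar + d - d * 2 ^ (-(k:ℝ)) with hxk
        set xk1 := xbar + d - d * 2 ^ (-((k:ℝ)+1)) with hxk1
        have h2k : (0:ℝ) < 2 ^ (-(k:ℝ)) := Real.rpow_pos_of_pos two_pos _
        have h2k1 : (0:ℝ) < 2 ^ (-((k:ℝ)+1)) := Real.rpow_pos_of_pos two_pos _
        have hle1 : (2:ℝ) ^ (-(k:ℝ)) ≤ 1 := by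
          rw [← Real.rpow_zero 2]
          exact Real.rpow_le_rpow_of_exponent_le one_le_two (by simp)
        have hxbar_le : xbar ≤ xk := by
          have : d * 2 ^ (-(k:ℝ)) ≤ d * 1 := by nlinarith
          simp only [hxk]; nlinarith
        have hdouble : (2:ℝ) ^ (-(k:ℝ)) = 2 * 2 ^ (-((k:ℝ)+1)) := by
          rw [show -(k:ℝ) = 1 + (-((k:ℝ)+1)) by ring, Real.rpow_add two_pos,
            Real.rpow_one]
        have hgap : xk1 - xk = d * 2 ^ (-((k:ℝ)+1)) := by
          rw [hxk, hxk1, hdouble]; ring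
        have hxk_le : xk ≤ xk1 := by nlinarith [hgap]
        have hφk1 : 0 ≤ φ xk1 := hnonneg _ (le_trans hxbar_le hxk_le)
        have hφk : 0 ≤ φ xk := hnonneg _ hxbar_le
        have hstep := hineq xk xk1 hxbar_le hxk_le
        rw [hgap] at hstep
        -- φ xk ^ γ ≤ (a * 2^{-bk}) ^ γ
        have hmono2 : φ xk ^ γ ≤ (a * 2 ^ (-(b*k))) ^ γ :=
          Real.rpow_le_rpow hφk ih (by linarith)
        have hstep2 : (d * 2 ^ (-((k:ℝ)+1))) ^ η * φ xk1 ≤ C * (a * 2 ^ (-(b*k))) ^ γ :=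
          le_trans hstep (by nlinarith)
        -- the key algebraic identity
        have hident : C * (a * 2 ^ (-(b*k))) ^ γ
            = (d * 2 ^ (-((k:ℝ)+1))) ^ η * (a * 2 ^ (-(b*((k:ℝ)+1)))) := by
          rw [Real.mul_rpow ha0 (by positivity), Real.mul_rpow hdpos.le (by positivity), hdη, hD_def,
            ← Real.rpow_mul two_pos.le, ← Real.rpow_mul two_pos.le,
            show a ^ γ = a ^ (γ-1) * a from by
              rw [← Real.rpow_add_one ha.ne', sub_add_cancel]]
          have hexp : (2:ℝ) ^ (-(b*(k:ℝ))*γ)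
              = 2 ^ (η*γ/(γ-1)) * 2 ^ (-((k:ℝ)+1)*η) * 2 ^ (-(b*((k:ℝ)+1))) := by
            rw [← Real.rpow_add two_pos, ← Real.rpow_add two_pos]
            congr 1
            rw [hb_def]
            field_simp
            ring
          rw [hexp]
          ring
        have hpos : (0:ℝ) < (d * 2 ^ (-((k:ℝ)+1))) ^ η :=
          Real.rpow_pos_of_pos (by positivity) _
        have : φ xk1 ≤ a * 2 ^ (-(b*((k:ℝ)+1))) := by
          rw [hident] at hstep2
          exact le_of_mul_le_mul_left hstep2 hpos
        -- rewrite cast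
        simp only [Nat.cast_add, Nat.cast_one]
        exact this
    -- limit
    have hzx : ∀ k : ℕ, φ z ≤ a * 2 ^ (-(b * k)) := by
      intro k
      have h2k : (0:ℝ) < 2 ^ (-(k:ℝ)) := Real.rpow_pos_of_pos two_pos _
      have hpos' : (0:ℝ) ≤ d * 2 ^ (-(k:ℝ)) := by positivity
      have hxk_le_z : xbar + d - d * 2 ^ (-(k:ℝ)) ≤ z := by linarith
      have hle1 : (2:ℝ) ^ (-(k:ℝ)) ≤ 1 := by
        rw [← Real.rpow_zero 2]
        exact Real.rpow_le_rpow_of_exponent_le one_le_two (by simp)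
      have hdk : d * 2 ^ (-(k:ℝ)) ≤ d * 1 := mul_le_mul_of_nonneg_left hle1 hdpos.le
      have hxbar_le : xbar ≤ xbar + d - d * 2 ^ (-(k:ℝ)) := by linarith
      exact le_trans (hmono _ z hxbar_le hxk_le_z) (key k)
    have htend : Filter.Tendsto (fun k : ℕ => a * 2 ^ (-(b * k))) Filter.atTop (nhds 0) := by
      have heq : ∀ k : ℕ, a * 2 ^ (-(b * k)) = a * ((2:ℝ) ^ (-b)) ^ k := by
        intro k
        rw [← Real.rpow_natCast ((2:ℝ)^(-b)) k, ← Real.rpow_mul two_pos.le]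
        ring_nf
      simp only [heq]
      rw [show (0:ℝ) = a * 0 by ring]
      refine Filter.Tendsto.const_mul a (tendsto_pow_atTop_nhds_zero_of_lt_one ?_ ?_)
      · positivity
      · rw [← Real.rpow_zero 2]
        exact Real.rpow_lt_rpow_of_exponent_lt one_lt_two (by linarith)
    have hle0 : φ z ≤ 0 := ge_of_tendsto' htend hzx
    have hge0 : 0 ≤ φ z := hnonneg z (by nlinarith)
    linarith
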